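/- Let α, β, θ > 0 and λ ∈ [−1,1], and set c_k = (−1)^k[(1+λ)·C(θ,k) − λ·C(2θ,k)] for k ∈ ℕ. For all reals G > 0 and D, the series with k-th term (−c_{k+1})·(k+1)·α·β·G^{α−1}·D·exp(−(k+1)βG^α) converges (HasSum) to θαβ G^{α−1} D exp(−βG^α)(1 − exp(−βG^α))^{θ−1}[1 + λ − 2λ(1 − exp(−βG^α))^θ]. (With G = g(x) and D = g′(x), this expresses the GTLD density as the mixture f(x) = Σ_{k=0}^∞ d_{k+1} h_{k+1}(x) of the lifetime densities h_{k+1} with scale (k+1)β, where d_{k+1} = −c_{k+1}.) -/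

import Mathlib

open Real

/-- Generalized binomial coefficient `C(a,k) = a(a−1)⋯(a−k+1)/k!`. -/
noncomputable def genChoose (a : ℝ) (k : ℕ) : ℝ :=
  (∏ i ∈ Finset.range k, (a - i)) / (Nat.factorial k)

lemma genChoose_succ (a : ℝ) (k : ℕ) :
    ((k : ℝ) + 1) * genChoose a (k + 1) = (a - k) * genChoose a k := by
  have hk : ((k + 1 : ℕ) : ℝ) ≠ 0 := by positivity
  have hf : ((Nat.factorial k : ℝ)) ≠ 0 := by positivity
  simp only [genChoose, Finset.prod_range_succ, Nat.factorial_succ]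
  push_cast
  field_simp

lemma summable_v (a : ℝ) {r : ℝ} (hr0 : 0 ≤ r) (hr1 : r < 1) :
    Summable (fun k : ℕ => |a - k| * |genChoose a k| * r ^ k) := by
  set r' : ℝ := (1 + r) / 2 with hr'
  have hr'1 : r' < 1 := by rw [hr']; linarith
  have hrr' : r < r' := by rw [hr']; linarith
  apply summable_of_ratio_norm_eventually_le hr'1
  obtain ⟨N, hN⟩ := Filter.eventually_atTop.mp
    (Filter.Tendsto.eventually_le_const hrr'
      (by
        have : Filter.Tendsto (fun k : ℕ => (|a| * r) / ((k : ℝ) + 1)) Filter.atTop (nhds 0) :=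
          Filter.Tendsto.div_atTop tendsto_const_nhds
            (Filter.tendsto_atTop_add_const_right _ 1 tendsto_natCast_atTop_atTop)
        simpa using this.const_add r))
  filter_upwards [Filter.eventually_ge_atTop N] with n hn
  have h1 := hN n hn
  have hn1 : (0:ℝ) < (n:ℝ) + 1 := by positivity
  have key : |genChoose a (n+1)| = |a - n| * |genChoose a n| / ((n:ℝ)+1) := by
    rw [eq_div_iff (ne_of_gt hn1), mul_comm _ ((n:ℝ)+1),
      ← abs_of_nonneg (le_of_lt hn1), ← abs_mul, genChoose_succ, abs_mul]
  have habs : |a - ((n+1:ℕ):ℝ)| ≤ |a| + ((n:ℝ)+1) := by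
    push_cast
    calc |a - ((n:ℝ)+1)| ≤ |a| + |(n:ℝ)+1| := abs_sub a _
    _ = |a| + ((n:ℝ)+1) := by rw [abs_of_nonneg (le_of_lt hn1)]
  rw [Real.norm_eq_abs, Real.norm_eq_abs,
    abs_of_nonneg (show (0:ℝ) ≤ |a - ((n+1:ℕ):ℝ)| * |genChoose a (n+1)| * r ^ (n+1) by positivity),
    abs_of_nonneg (show (0:ℝ) ≤ |a - (n:ℝ)| * |genChoose a n| * r ^ n by positivity)]
  have heq : |a - ((n+1:ℕ):ℝ)| * |genChoose a (n+1)| * r ^ (n+1)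
      = (|a - ((n+1:ℕ):ℝ)| * r / ((n:ℝ)+1)) * (|a - n| * |genChoose a n| * r ^ n) := by
    rw [key, pow_succ]
    field_simp
  rw [heq]
  have hfac : |a - ((n+1:ℕ):ℝ)| * r / ((n:ℝ)+1) ≤ r' := by
    have : |a - ((n+1:ℕ):ℝ)| * r ≤ (|a| + ((n:ℝ)+1)) * r :=
      mul_le_mul_of_nonneg_right habs hr0
    calc |a - ((n+1:ℕ):ℝ)| * r / ((n:ℝ)+1) ≤ (|a| + ((n:ℝ)+1)) * r / ((n:ℝ)+1) := by
          exact div_le_div_of_nonneg_right this (le_of_lt hn1) |>.trans_eq rfl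
      _ = r + |a| * r / ((n:ℝ)+1) := by field_simp; ring
      _ ≤ r' := h1
  exact mul_le_mul_of_nonneg_right hfac (by positivity)

noncomputable def bc (a : ℝ) (k : ℕ) : ℝ := genChoose a k * (-1)^k

lemma bc_zero (a : ℝ) : bc a 0 = 1 := by simp [bc, genChoose]

lemma bc_abs (a : ℝ) (k : ℕ) : |bc a k| = |genChoose a k| := by
  rw [bc, abs_mul, abs_pow, abs_neg, abs_one, one_pow, mul_one]

lemma bc_succ (a : ℝ) (k : ℕ) :
    ((k : ℝ) + 1) * bc a (k + 1) = ((k : ℝ) - a) * bc a k := by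
  have h := genChoose_succ a k
  simp only [bc]
  have : ((k:ℝ)+1) * (genChoose a (k+1) * (-1)^(k+1))
      = (((k:ℝ)+1) * genChoose a (k+1)) * (-1)^(k+1) := by ring
  rw [this, h]
  ring

lemma summable_w (a : ℝ) {r : ℝ} (hr0 : 0 ≤ r) (hr1 : r < 1) :
    Summable (fun k : ℕ => |genChoose a k| * ((k : ℝ) * r ^ (k - 1))) := by
  rw [← summable_nat_add_iff 1]
  have : (fun n : ℕ => |genChoose a (n + 1)| * (((n + 1 : ℕ) : ℝ) * r ^ (n + 1 - 1)))
      = fun n : ℕ => |a - n| * |genChoose a n| * r ^ n := by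
    funext n
    have hn1 : (0:ℝ) < (n:ℝ) + 1 := by positivity
    have key : ((n:ℝ)+1) * |genChoose a (n+1)| = |a - n| * |genChoose a n| := by
      rw [← abs_of_nonneg (le_of_lt hn1), ← abs_mul, genChoose_succ, abs_mul]
    push_cast
    calc |genChoose a (n+1)| * (((n:ℝ) + 1) * r ^ n)
        = (((n:ℝ)+1) * |genChoose a (n+1)|) * r ^ n := by ring
      _ = |a - n| * |genChoose a n| * r ^ n := by rw [key]
  rw [this]
  exact summable_v a hr0 hr1

lemma binom_deriv_hasSum (a : ℝ) {u : ℝ} (hu0 : 0 < u) (hu1 : u < 1) :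
    HasSum (fun k : ℕ => (-1:ℝ)^k * (((k:ℝ)+1) * genChoose a (k+1)) * u^(k+1))
      (a * u * (1-u)^(a-1)) := by
  set r : ℝ := (1 + u) / 2 with hrdef
  have hur : u < r := by rw [hrdef]; linarith
  have hr0 : 0 < r := by rw [hrdef]; linarith
  have hr1 : r < 1 := by rw [hrdef]; linarith
  set t : Set ℝ := Set.Ioo (-r) r with htdef
  have hmem : ∀ y ∈ t, |y| ≤ r := by
    intro y hy
    rw [abs_le]
    exact ⟨le_of_lt hy.1, le_of_lt hy.2⟩
  -- the bounding series
  set w : ℕ → ℝ := fun k => |genChoose a k| * ((k : ℝ) * r ^ (k - 1)) with hwdef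
  have hw : Summable w := summable_w a (le_of_lt hr0) hr1
  -- derivatives of each term
  have hderiv : ∀ (k : ℕ) (y : ℝ),
      HasDerivAt (fun z => bc a k * z ^ k) (bc a k * ((k:ℝ) * y ^ (k-1))) y :=
    fun k y => (hasDerivAt_pow k y).const_mul (bc a k)
  have hbound : ∀ (k : ℕ) (y : ℝ), y ∈ t → ‖bc a k * ((k:ℝ) * y ^ (k-1))‖ ≤ w k := by
    intro k y hy
    rw [Real.norm_eq_abs, abs_mul, bc_abs, abs_mul, Nat.abs_cast, abs_pow, hwdef]
    have hyk : |y| ^ (k-1) ≤ r ^ (k-1) := pow_le_pow_left₀ (abs_nonneg y) (hmem y hy) _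
    exact mul_le_mul_of_nonneg_left
      (mul_le_mul_of_nonneg_left hyk (Nat.cast_nonneg k)) (abs_nonneg _)
  have h0t : (0:ℝ) ∈ t := by constructor <;> [linarith; linarith]
  have hut : u ∈ t := by constructor <;> [linarith; linarith]
  have hsum0 : Summable (fun k : ℕ => bc a k * (0:ℝ) ^ k) := by
    apply summable_of_ne_finset_zero (s := {0})
    intro k hk
    have : k ≠ 0 := by simpa using hk
    simp [zero_pow this]
  -- sum functions
  set S : ℝ → ℝ := fun y => ∑' k, bc a k * y ^ k with hSdef
  set Dv : ℝ → ℝ := fun y => ∑' k, bc a k * ((k:ℝ) * y ^ (k-1)) with hDdef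
  have hSd : ∀ y ∈ t, HasDerivAt S (Dv y) y := by
    intro y hy
    exact hasDerivAt_tsum_of_isPreconnected hw isOpen_Ioo (convex_Ioo _ _).isPreconnected
      (fun k z hz => hderiv k z) hbound h0t hsum0 hy
  -- summability at points of t
  have hDsum : ∀ y ∈ t, HasSum (fun k => bc a k * ((k:ℝ) * y ^ (k-1))) (Dv y) := by
    intro y hy
    exact (Summable.of_norm_bounded hw (fun k => hbound k y hy)).hasSum
  have hw2 : Summable (fun k : ℕ => |genChoose a k| * r ^ k) := by
    rw [← summable_nat_add_iff 1]
    refine Summable.of_nonneg_of_le (fun n => by positivity) (fun n => ?_)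
      ((summable_nat_add_iff 1).mpr hw)
    have h1 : r ^ (n + 1) ≤ ((n:ℝ)+1) * r ^ (n + 1 - 1) := by
      rw [Nat.add_sub_cancel, pow_succ, mul_comm (r ^ n) r]
      have : r * r ^ n ≤ 1 * (((n:ℝ)+1) * r ^ n) := by
        rw [one_mul]
        have h2 : r ^ n ≤ ((n:ℝ)+1) * r ^ n := by
          nlinarith [pow_nonneg (le_of_lt hr0) n, Nat.cast_nonneg (α := ℝ) n]
        nlinarith [pow_nonneg (le_of_lt hr0) n]
      linarith
    calc |genChoose a (n+1)| * r ^ (n+1)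
        ≤ |genChoose a (n+1)| * (((n:ℝ)+1) * r ^ (n + 1 - 1)) :=
          mul_le_mul_of_nonneg_left h1 (abs_nonneg _)
      _ = |genChoose a (n+1)| * (((n+1:ℕ):ℝ) * r ^ (n + 1 - 1)) := by push_cast; ring
  have hSsum : ∀ y ∈ t, HasSum (fun k => bc a k * y ^ k) (S y) := by
    intro y hy
    refine (Summable.of_norm_bounded hw2 (fun k => ?_)).hasSum
    rw [Real.norm_eq_abs, abs_mul, bc_abs, abs_pow]
    exact mul_le_mul_of_nonneg_left (pow_le_pow_left₀ (abs_nonneg y) (hmem y hy) k) (abs_nonneg _)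
  -- shifted series
  have hshift : ∀ y ∈ t, HasSum (fun k : ℕ => bc a (k+1) * (((k:ℝ)+1) * y ^ k)) (Dv y) := by
    intro y hy
    have hD := hDsum y hy
    have := (hasSum_nat_add_iff' (f := fun k => bc a k * ((k:ℝ) * y ^ (k-1))) 1).mpr hD
    simp only [Finset.sum_range_one, Nat.cast_zero, zero_mul, mul_zero, sub_zero] at this
    convert this using 2 with k
    case e'_3 => rfl
    push_cast
    norm_num
  -- functional equation on t
  have hfun : ∀ y ∈ t, (1 - y) * Dv y = -(a * S y) := by
    intro y hy
    have hD := hDsum y hy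
    have hS := hSsum y hy
    have hshift := hshift y hy
    -- y * Dv series
    have hA : HasSum (fun k : ℕ => bc a k * ((k:ℝ) * y ^ k)) (Dv y * y) := by
      have := hD.mul_right y
      convert this using 2 with k
      case e'_3 => rfl
      cases k with
      | zero => simp
      | succ n =>
        simp only [Nat.add_sub_cancel]
        push_cast
        ring
    have hB : HasSum (fun k : ℕ => a * (bc a k * y ^ k)) (a * S y) := hS.mul_left a
    have hterm : ∀ k : ℕ, bc a (k+1) * (((k:ℝ)+1) * y ^ k)
        = bc a k * ((k:ℝ) * y ^ k) - a * (bc a k * y ^ k) := by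
      intro k
      have h := bc_succ a k
      calc bc a (k+1) * (((k:ℝ)+1) * y ^ k) = (((k:ℝ)+1) * bc a (k+1)) * y ^ k := by ring
        _ = (((k:ℝ) - a) * bc a k) * y ^ k := by rw [h]
        _ = bc a k * ((k:ℝ) * y ^ k) - a * (bc a k * y ^ k) := by ring
    have h2 : HasSum (fun k : ℕ => bc a (k+1) * (((k:ℝ)+1) * y ^ k)) (Dv y * y - a * S y) := by
      have := hA.sub hB
      convert this using 2 with k
      case e'_3 => rfl
      exact hterm k
    have := hshift.unique h2
    linarith
  -- the auxiliary function F
  have h1y : ∀ y ∈ t, (0:ℝ) < 1 - y := by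
    intro y hy
    have := hy.2
    linarith
  set F : ℝ → ℝ := fun y => S y * (1 - y) ^ (-a) with hFdef
  have hFd : ∀ y ∈ t, HasDerivAt F 0 y := by
    intro y hy
    have h1 : (0:ℝ) < 1 - y := h1y y hy
    have hin : HasDerivAt (fun z : ℝ => 1 - z) (-1) y := (hasDerivAt_id y).const_sub 1
    have hpow : HasDerivAt (fun z : ℝ => (1 - z) ^ (-a))
        ((-1) * (-a) * (1 - y) ^ (-a - 1)) y :=
      hin.rpow_const (Or.inl (ne_of_gt h1))
    have hmul := (hSd y hy).mul hpow
    have key := hfun y hy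
    have hsplit : (1 - y) ^ (-a) = (1 - y) ^ (-a - 1) * (1 - y) := by
      have := Real.rpow_add h1 (-a - 1) 1
      rw [Real.rpow_one] at this
      rw [← this]
      norm_num
    have hzero : Dv y * (1 - y) ^ (-a) + S y * ((-1) * (-a) * (1 - y) ^ (-a - 1)) = 0 := by
      rw [hsplit]
      have : Dv y * ((1 - y) ^ (-a - 1) * (1 - y)) + S y * (-1 * -a * (1 - y) ^ (-a - 1))
          = (1 - y) ^ (-a - 1) * ((1 - y) * Dv y + a * S y) := by ring
      rw [this, key]
      ring
    rw [← hzero]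
    exact hmul
  -- F is constant on [0, u]
  have hsub : Set.Icc (0:ℝ) u ⊆ t := by
    intro z hz
    simp only [htdef, Set.mem_Ioo]
    constructor
    · linarith [hz.1]
    · linarith [hz.2]
  have hcont : ContinuousOn F (Set.Icc 0 u) :=
    fun z hz => ((hFd z (hsub hz)).continuousAt).continuousWithinAt
  have hFu : F u = F 0 := by
    refine constant_of_has_deriv_right_zero hcont (fun z hz => ?_) u
      (Set.right_mem_Icc.mpr (le_of_lt hu0))
    exact (hFd z (hsub (Set.Ico_subset_Icc_self hz))).hasDerivWithinAt
  have hS0 : S 0 = 1 := by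
    show (∑' k, bc a k * (0:ℝ) ^ k) = 1
    rw [tsum_eq_single 0 (fun k hk => by simp [zero_pow hk])]
    simp [bc_zero]
  have hF0 : F 0 = 1 := by
    show S 0 * ((1:ℝ) - 0) ^ (-a) = 1
    rw [hS0]
    norm_num
  have h1u : (0:ℝ) < 1 - u := by linarith
  have hSu : S u = (1 - u) ^ a := by
    have heq : S u * (1 - u) ^ (-a) = 1 := by
      have h := hFu.trans hF0
      simpa only [hFdef] using h
    have hne : ((1 - u) ^ a : ℝ) ≠ 0 := ne_of_gt (Real.rpow_pos_of_pos h1u a)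
    rw [Real.rpow_neg (le_of_lt h1u)] at heq
    field_simp at heq
    linarith
  have hDu : Dv u = -(a * (1 - u) ^ (a - 1)) := by
    have key := hfun u hut
    rw [hSu] at key
    have hsplit2 : (1 - u) ^ a = (1 - u) ^ (a - 1) * (1 - u) := by
      have := Real.rpow_add h1u (a - 1) 1
      rw [Real.rpow_one] at this
      rw [← this]
      norm_num
    rw [hsplit2] at key
    have : (1 - u) * Dv u = (1 - u) * (-(a * (1 - u) ^ (a - 1))) := by
      rw [key]; ring
    exact mul_left_cancel₀ (ne_of_gt h1u) this
  -- conclude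
  have hfin := (hshift u hut).mul_right (-u)
  rw [hDu] at hfin
  have hval : -(a * (1 - u) ^ (a - 1)) * -u = a * u * (1 - u) ^ (a - 1) := by ring
  rw [hval] at hfin
  have hfun_eq : (fun k : ℕ => (-1:ℝ)^k * (((k:ℝ)+1) * genChoose a (k+1)) * u^(k+1))
      = fun k : ℕ => bc a (k+1) * (((k:ℝ)+1) * u ^ k) * -u := by
    funext k
    simp only [bc, pow_succ]
    ring
  rw [hfun_eq]
  exact hfin

/-- The GTLD density as a mixture of lifetime densities: with
`c_k = (−1)^k[(1+λ)C(θ,k) − λC(2θ,k)]`, for `G > 0` and any `D`, the series with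
`k`-th term `(−c_{k+1})·(k+1)·αβ G^{α−1} D e^{−(k+1)βG^α}` has sum
`θαβ G^{α−1} D e^{−βG^α}(1 − e^{−βG^α})^{θ−1}[1 + λ − 2λ(1 − e^{−βG^α})^θ]`. -/
theorem gtld_pdf_mixture (α β θ lam : ℝ) (hα : 0 < α) (hβ : 0 < β) (hθ : 0 < θ)
    (hlam : lam ∈ Set.Icc (-1 : ℝ) 1) (G D : ℝ) (hG : 0 < G) :
    HasSum
      (fun k : ℕ =>
        (-((-1 : ℝ) ^ (k + 1) *
            ((1 + lam) * genChoose θ (k + 1) - lam * genChoose (2 * θ) (k + 1)))) *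
          ((k : ℝ) + 1) * α * β * G ^ (α - 1) * D *
            Real.exp (-(((k : ℝ) + 1) * β * G ^ α)))
      (θ * α * β * G ^ (α - 1) * D * Real.exp (-β * G ^ α) *
        (1 - Real.exp (-β * G ^ α)) ^ (θ - 1) *
        (1 + lam - 2 * lam * (1 - Real.exp (-β * G ^ α)) ^ θ)) := by
  have hGα : 0 < G ^ α := Real.rpow_pos_of_pos hG α
  set u : ℝ := Real.exp (-β * G ^ α) with hudef
  have hu0 : 0 < u := Real.exp_pos _
  have hu1 : u < 1 := by
    rw [hudef, Real.exp_lt_one_iff]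
    nlinarith
  have h1u : (0:ℝ) < 1 - u := by linarith
  have h1 := binom_deriv_hasSum θ hu0 hu1
  have h2 := binom_deriv_hasSum (2 * θ) hu0 hu1
  have combo := ((h1.mul_left (1 + lam)).sub (h2.mul_left lam)).mul_right
    (α * β * G ^ (α - 1) * D)
  have hexp : ∀ k : ℕ, Real.exp (-(((k:ℝ)+1) * β * G ^ α)) = u ^ (k+1) := by
    intro k
    rw [hudef, ← Real.exp_nat_mul]
    congr 1
    push_cast
    ring
  have hfeq : (fun k : ℕ =>
        (-((-1 : ℝ) ^ (k + 1) *
            ((1 + lam) * genChoose θ (k + 1) - lam * genChoose (2 * θ) (k + 1)))) *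
          ((k : ℝ) + 1) * α * β * G ^ (α - 1) * D *
            Real.exp (-(((k : ℝ) + 1) * β * G ^ α)))
      = fun k : ℕ =>
        ((1 + lam) * ((-1:ℝ)^k * (((k:ℝ)+1) * genChoose θ (k+1)) * u^(k+1))
          - lam * ((-1:ℝ)^k * (((k:ℝ)+1) * genChoose (2*θ) (k+1)) * u^(k+1)))
          * (α * β * G ^ (α - 1) * D) := by
    funext k
    rw [hexp k]
    ring
  rw [hfeq]
  convert combo using 1
  case e'_3 => rfl
  have hsplit : (1-u)^(2*θ-1) = (1-u)^(θ-1) * (1-u)^θ := by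
    rw [← Real.rpow_add h1u]
    congr 1
    ring
  rw [hsplit]
  ring
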